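/- Let (H, ≼) be a premonoid such that every element has finite ≼-height, and suppose that for each x ∈ H that is neither a ≼-unit nor a ≼-quark, there exist ≼-non-units y, z ∈ H with y ≼ x, z ≼ x, x = yz, and ht(y) + ht(z) ≤ ht(x). Then every ≼-irreducible of H is a ≼-quark. -/

import Mathlib

section

variable {H : Type*} [Monoid H]

/-- `u` is a `r`-non-unit: not `r`-equivalent to the identity. -/
def PreNonUnit [Monoid H] (r : H → H → Prop) (u : H) : Prop := ¬ (r u 1 ∧ r 1 u)

/-- Strict part of the preorder `r`. -/
def PreLt (r : H → H → Prop) (x y : H) : Prop := r x y ∧ ¬ r y x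

/-- The `r`-height of `x`: the sup of all `n ≥ 1` such that there is a chain of
`r`-non-units `x = x_1 ≻ x_2 ≻ ⋯ ≻ x_n`. -/
noncomputable def PreHeight [Monoid H] (r : H → H → Prop) (x : H) : ℕ∞ :=
  sSup {n : ℕ∞ | ∃ m : ℕ, n = m ∧ 1 ≤ m ∧ ∃ f : ℕ → H, f 0 = x ∧
    (∀ i < m, PreNonUnit r (f i)) ∧ ∀ i, i + 1 < m → PreLt r (f (i + 1)) (f i)}

/-- `a` is an `r`-quark. -/
def PreQuark [Monoid H] (r : H → H → Prop) (a : H) : Prop :=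
  PreNonUnit r a ∧ ¬ ∃ b, PreNonUnit r b ∧ PreLt r b a

/-- `a` is an `r`-irreducible. -/
def PreIrred [Monoid H] (r : H → H → Prop) (a : H) : Prop :=
  PreNonUnit r a ∧ ∀ x y : H, PreNonUnit r x → PreNonUnit r y →
    PreLt r x a → PreLt r y a → a ≠ x * y

lemma preHeight_pos (r : H → H → Prop) {z : H} (hz : PreNonUnit r z) :
    1 ≤ PreHeight r z := by
  apply le_sSup
  refine ⟨1, by norm_num, le_refl 1, fun _ => z, rfl, ?_, ?_⟩
  · intro i hi; exact hz
  · intro i hi; omega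

lemma preHeight_le_of_equiv (r : H → H → Prop)
    (htrans : ∀ x y z, r x y → r y z → r x z)
    {a y : H} (hy : PreNonUnit r y) (hya : r y a) (hay : r a y) :
    PreHeight r a ≤ PreHeight r y := by
  apply sSup_le_sSup
  rintro n ⟨m, rfl, hm, f, hf0, hnu, hlt⟩
  refine ⟨m, rfl, hm, fun i => if i = 0 then y else f i, by simp, ?_, ?_⟩
  · intro i hi
    by_cases h : i = 0 <;> simp [h]
    · exact hy
    · exact hnu i hi
  · intro i hi
    simp only [Nat.succ_ne_zero, if_neg]
    by_cases h : i = 0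
    · subst h
      simp only [if_pos rfl]
      have h1 := hlt 0 hi
      rw [hf0] at h1
      exact ⟨htrans _ _ _ h1.1 hay, fun hc => h1.2 (htrans _ _ _ hay hc)⟩
    · simp only [if_neg h]
      exact hlt i hi

theorem stmt_2 (r : H → H → Prop)
    (hrefl : ∀ x, r x x) (htrans : ∀ x y z, r x y → r y z → r x z)
    (hsa : ∀ x : H, PreHeight r x ≠ ⊤)
    (hdec : ∀ x : H, PreNonUnit r x → ¬ PreQuark r x →
      ∃ y z : H, PreNonUnit r y ∧ PreNonUnit r z ∧ r y x ∧ r z x ∧ x = y * z ∧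
        PreHeight r y + PreHeight r z ≤ PreHeight r x) :
    ∀ a : H, PreIrred r a → PreQuark r a := by
  intro a ha
  by_contra hq
  obtain ⟨y, z, hy, hz, hya, hza, heq, hht⟩ := hdec a ha.1 hq
  -- not both y ≺ a and z ≺ a, by irreducibility
  have key : ∀ w : H, PreNonUnit r w → r w a → ¬ PreLt r w a →
      PreHeight r a ≤ PreHeight r w := by
    intro w hw hwa hnlt
    have haw : r a w := by
      by_contra hc; exact hnlt ⟨hwa, hc⟩
    exact preHeight_le_of_equiv r htrans hw hwa haw
  have contra : ∀ u v : H, PreNonUnit r u → PreNonUnit r v → r u a →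
      ¬ PreLt r u a → PreHeight r u + PreHeight r v ≤ PreHeight r a → False := by
    intro u v hu hv hua hnlt hle
    have h1 : PreHeight r a ≤ PreHeight r u := key u hu hua hnlt
    have h2 : PreHeight r u + 1 ≤ PreHeight r u :=
      le_trans (add_le_add_right (preHeight_pos r hv) _) (le_trans hle h1)
    have := hsa u
    rw [ENat.add_one_le_iff this] at h2
    exact lt_irrefl _ h2
  by_cases hylt : PreLt r y a
  · by_cases hzlt : PreLt r z a
    · exact ha.2 y z hy hz hylt hzlt heq
    · exact contra z y hz hy hza hzlt (by rwa [add_comm] at hht)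
  · exact contra y z hy hz hya hylt hht

end
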